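/- Let F, k_f, ρ be positive integers with ℓ ≤ k_f ≤ F/2 and ρ ≤ F/(2·k_f). Then 1 − C(F−ℓ−1, ρ−1)/C(F, ρ) = 1 − (ρ/(F−ℓ))·∏_{j=1}^{ℓ} (1 − ρ/(F−j+1)), and this quantity is at most 1 − (ρ/F)·(1 − 2ρ/F)^ℓ. -/

import Mathlib

lemma key_ratio (F ρ : ℕ) (hρ : 0 < ρ) : ∀ ℓ : ℕ, ρ + ℓ ≤ F →
    ((F - ℓ - 1).choose (ρ - 1) : ℝ) / (F.choose ρ : ℝ)
      = ((ρ : ℝ) / ((F : ℝ) - ℓ)) *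
          ∏ j ∈ Finset.Icc 1 ℓ, (1 - (ρ : ℝ) / ((F : ℝ) - j + 1)) := by
  intro ℓ
  induction ℓ with
  | zero =>
    intro h
    have hρF : ρ ≤ F := by omega
    have hnat : F * (F - 1).choose (ρ - 1) = F.choose ρ * ρ := by
      have := Nat.add_one_mul_choose_eq (F - 1) (ρ - 1)
      have e1 : F - 1 + 1 = F := by omega
      have e2 : ρ - 1 + 1 = ρ := by omega
      rwa [e1, e2] at this
    have hC : (0:ℝ) < (F.choose ρ : ℝ) := by
      exact_mod_cast Nat.choose_pos hρF
    have hcast : (F : ℝ) * ((F - 1).choose (ρ - 1) : ℝ) = (F.choose ρ : ℝ) * ρ := by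
      exact_mod_cast hnat
    have hF : (0:ℝ) < (F:ℝ) := by exact_mod_cast (by omega : 0 < F)
    simp only [Nat.sub_zero, Nat.cast_zero, sub_zero]
    rw [show Finset.Icc 1 0 = (∅ : Finset ℕ) by rfl]
    simp only [Finset.prod_empty, mul_one]
    field_simp
    linarith [hcast]
  | succ ℓ ih =>
    intro h
    have hF2 : ℓ + 2 ≤ F := by omega
    have hnat : (F - ℓ - 2).choose (ρ - 1) * (F - ℓ - 1) = (F - ℓ - 1).choose (ρ - 1) * (F - ℓ - ρ) := by
      have := Nat.choose_mul_succ_eq (F - ℓ - 2) (ρ - 1)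
      rw [show F - ℓ - 2 + 1 = F - ℓ - 1 by omega] at this
      rwa [show F - ℓ - 1 - (ρ - 1) = F - ℓ - ρ by omega] at this
    have hC : (0:ℝ) < (F.choose ρ : ℝ) := by
      exact_mod_cast Nat.choose_pos (by omega : ρ ≤ F)
    have hcast : ((F - ℓ - 2).choose (ρ - 1) : ℝ) * ((F:ℝ) - ℓ - 1)
        = ((F - ℓ - 1).choose (ρ - 1) : ℝ) * ((F:ℝ) - ℓ - ρ) := by
      have h1 : ((F - ℓ - 1 : ℕ) : ℝ) = (F:ℝ) - ℓ - 1 := by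
        rw [Nat.cast_sub (by omega : 1 ≤ F - ℓ), Nat.cast_sub (by omega : ℓ ≤ F)]
        push_cast; try ring
      have h2 : ((F - ℓ - ρ : ℕ) : ℝ) = (F:ℝ) - ℓ - ρ := by
        rw [Nat.cast_sub (by omega : ρ ≤ F - ℓ), Nat.cast_sub (by omega : ℓ ≤ F)]
      rw [← h1, ← h2]
      exact_mod_cast hnat
    have hρ' : (0:ℝ) < (ρ:ℝ) := by exact_mod_cast hρ
    have hd1 : (0:ℝ) < (F:ℝ) - ℓ := by
      have : (ℓ:ℝ) + 1 ≤ F := by exact_mod_cast (by omega : ℓ + 1 ≤ F)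
      linarith
    have hd2 : (0:ℝ) < (F:ℝ) - ℓ - 1 := by
      have : (ℓ:ℝ) + 2 ≤ F := by exact_mod_cast hF2
      linarith
    rw [show F - (ℓ + 1) - 1 = F - ℓ - 2 by omega,
        Finset.prod_Icc_succ_top (by omega : 1 ≤ ℓ + 1)]
    have ihh := ih (by omega)
    push_cast
    rw [show (F:ℝ) - (↑ℓ + 1) = (F:ℝ) - ↑ℓ - 1 by ring,
        show (F:ℝ) - ↑ℓ - 1 + 1 = (F:ℝ) - ↑ℓ by ring]
    have hP : ∏ j ∈ Finset.Icc 1 ℓ, (1 - (ρ : ℝ) / ((F : ℝ) - j + 1))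
        = ((F - ℓ - 1).choose (ρ - 1) : ℝ) / (F.choose ρ : ℝ) * (((F:ℝ) - ℓ) / ρ) := by
      rw [ihh]; field_simp
    rw [hP]
    field_simp
    linear_combination hcast

theorem stmt_4 (F kf ρ ℓ : ℕ) (hF : 0 < F) (hkf : 0 < kf) (hρ : 0 < ρ)
    (hℓ : ℓ ≤ kf) (hkfF : (kf : ℝ) ≤ F / 2) (hρF : (ρ : ℝ) ≤ (F : ℝ) / (2 * kf)) :
    (1 - ((F - ℓ - 1).choose (ρ - 1) : ℝ) / (F.choose ρ : ℝ)
      = 1 - ((ρ : ℝ) / ((F : ℝ) - ℓ)) *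
          ∏ j ∈ Finset.Icc 1 ℓ, (1 - (ρ : ℝ) / ((F : ℝ) - j + 1))) ∧
    (1 - ((F - ℓ - 1).choose (ρ - 1) : ℝ) / (F.choose ρ : ℝ)
      ≤ 1 - ((ρ : ℝ) / F) * (1 - 2 * ρ / F) ^ ℓ) := by
  have hFpos : (0:ℝ) < F := by exact_mod_cast hF
  have hkf1 : (1:ℝ) ≤ (kf:ℝ) := by exact_mod_cast hkf
  have hρ2 : (ρ:ℝ) ≤ (F:ℝ) / 2 := by
    have h1 : (F:ℝ) / (2 * kf) ≤ (F:ℝ) / 2 := by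
      apply div_le_div_of_nonneg_left (le_of_lt hFpos) (by norm_num)
      linarith
    linarith
  have hℓ2 : (ℓ:ℝ) ≤ (F:ℝ) / 2 := by
    have : (ℓ:ℝ) ≤ (kf:ℝ) := by exact_mod_cast hℓ
    linarith
  have hsum : ρ + ℓ ≤ F := by
    have : (ρ:ℝ) + (ℓ:ℝ) ≤ (F:ℝ) := by linarith
    exact_mod_cast this
  have heq := key_ratio F ρ hρ ℓ hsum
  constructor
  · rw [heq]
  · rw [heq]
    have hρ' : (0:ℝ) < (ρ:ℝ) := by exact_mod_cast hρ
    have hd1 : (0:ℝ) < (F:ℝ) - ℓ := by linarith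
    have h0 : (0:ℝ) ≤ 1 - 2 * ρ / F := by
      rw [sub_nonneg, div_le_one hFpos]; linarith
    have hpow : ((1:ℝ) - 2 * ρ / F) ^ ℓ = ∏ j ∈ Finset.Icc 1 ℓ, ((1:ℝ) - 2 * ρ / F) := by
      rw [Finset.prod_const, Nat.card_Icc]; norm_num
    have hprod : ∏ j ∈ Finset.Icc 1 ℓ, ((1:ℝ) - 2 * ρ / F)
        ≤ ∏ j ∈ Finset.Icc 1 ℓ, (1 - (ρ : ℝ) / ((F : ℝ) - j + 1)) := by
      apply Finset.prod_le_prod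
      · intro i _; exact h0
      · intro i hi
        rw [Finset.mem_Icc] at hi
        have hi2 : (i:ℝ) ≤ (F:ℝ) / 2 := by
          have : (i:ℝ) ≤ (ℓ:ℝ) := by exact_mod_cast hi.2
          linarith
        have hpos : (0:ℝ) < (F:ℝ) - i + 1 := by linarith
        have : (ρ:ℝ) / ((F:ℝ) - i + 1) ≤ 2 * ρ / F := by
          rw [div_le_div_iff₀ hpos hFpos]
          nlinarith
        linarith
    have hmul : (ρ:ℝ) / F ≤ (ρ:ℝ) / ((F:ℝ) - ℓ) := by
      apply div_le_div_of_nonneg_left (le_of_lt hρ') hd1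
      have : (0:ℝ) ≤ (ℓ:ℝ) := Nat.cast_nonneg ℓ
      linarith
    have hfinal : (ρ:ℝ) / F * (1 - 2 * ρ / F) ^ ℓ
        ≤ (ρ:ℝ) / ((F:ℝ) - ℓ) * ∏ j ∈ Finset.Icc 1 ℓ, (1 - (ρ : ℝ) / ((F : ℝ) - j + 1)) := by
      rw [hpow]
      apply mul_le_mul hmul hprod (Finset.prod_nonneg fun i _ => h0)
      positivity
    linarith
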